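/- Let n ≥ 1 and let p, q ∈ (0,1)^n. Let P and Q be the product distributions over {0,1}^n with mean vectors p and q respectively. Then ‖P − Q‖₁² ≤ 2·∑_{i=1}^n (p_i − q_i)²/(q_i(1 − q_i)). -/

import Mathlib

/-- The product distribution over `{0,1}^n` with mean vector `p`. -/
noncomputable def prodDist {n : ℕ} (p : Fin n → ℝ) : (Fin n → Bool) → ℝ :=
  fun x => ∏ i, if x i then p i else 1 - p i

/-- The L1 distance between two distributions on a finite set. -/
noncomputable def l1Dist {α : Type*} [Fintype α] (P Q : α → ℝ) : ℝ :=
  ∑ x, |P x - Q x|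

section aux

open Real Finset

/-- Pointwise log-sum inequality building block. -/
lemma logsum_pointwise {u v c : ℝ} (hu : 0 < u) (hv : 0 < v) (hc : 0 < c) :
    u * Real.log c + u - c * v ≤ u * (Real.log u - Real.log v) := by
  have h := Real.log_le_sub_one_of_pos (show 0 < v * c / u by positivity)
  rw [Real.log_div (by positivity) hu.ne', Real.log_mul hv.ne' hc.ne'] at h
  have huvc : u * (v * c / u) = v * c := by field_simp
  nlinarith [mul_le_mul_of_nonneg_left h hu.le]

/-- Pinsker's inequality for Bernoulli distributions. -/
lemma scalar_pinsker {a b : ℝ} (hb : 0 < b) (hba : b ≤ a) (ha : a < 1) :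
    2 * (a - b) ^ 2
      ≤ a * (Real.log a - Real.log b)
        + (1 - a) * (Real.log (1 - a) - Real.log (1 - b)) := by
  set f : ℝ → ℝ := fun t =>
    a * (Real.log a - Real.log t) + (1 - a) * (Real.log (1 - a) - Real.log (1 - t))
      - 2 * (a - t) ^ 2 with hf
  have key : AntitoneOn f (Set.Icc b a) := by
    apply antitoneOn_of_hasDerivWithinAt_nonpos (convex_Icc b a)
      (f' := fun t => (a * -t⁻¹ + (1 - a) * -((1 - t)⁻¹ * -1)) - 2 * (2 * (a - t) ^ 1 * -1))
    · have h0 : ∀ t ∈ Set.Icc b a, t ≠ 0 := fun t ht => by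
        have := ht.1; intro h; rw [h] at this; linarith
      have h1 : ∀ t ∈ Set.Icc b a, (1:ℝ) - t ≠ 0 := fun t ht => by
        have := ht.2; intro h; nlinarith
      apply ContinuousOn.sub
      apply ContinuousOn.add
      · exact continuousOn_const.mul (continuousOn_const.sub (continuousOn_id.log h0))
      · exact continuousOn_const.mul
          (continuousOn_const.sub ((continuousOn_const.sub continuousOn_id).log h1))
      · exact continuousOn_const.mul ((continuousOn_const.sub continuousOn_id).pow 2)
    · intro t ht
      rw [interior_Icc] at ht
      have ht0 : 0 < t := lt_of_lt_of_le hb ht.1.le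
      have ht1 : t < 1 := lt_of_le_of_lt ht.2.le ha
      have hd : HasDerivAt f
          ((a * -t⁻¹ + (1 - a) * -((1 - t)⁻¹ * -1)) - 2 * (2 * (a - t) ^ 1 * -1)) t := by
        apply HasDerivAt.sub
        · apply HasDerivAt.add
          · exact ((Real.hasDerivAt_log ht0.ne').const_sub (Real.log a)).const_mul a
          · have h1t : HasDerivAt (fun t : ℝ => 1 - t) (-1) t := (hasDerivAt_id t).const_sub 1
            have h2 := (Real.hasDerivAt_log (by intro h; nlinarith : (1:ℝ) - t ≠ 0)).comp t h1t
            exact (h2.const_sub (Real.log (1 - a))).const_mul (1 - a)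
        · exact (((hasDerivAt_id t).const_sub a).pow 2).const_mul 2
      exact hd.hasDerivWithinAt
    · intro t ht
      rw [interior_Icc] at ht
      have ht0 : 0 < t := lt_of_lt_of_le hb ht.1.le
      have ht1 : t < 1 := lt_of_le_of_lt ht.2.le ha
      have hta : t ≤ a := ht.2.le
      have h4 : 4 * (t * (1 - t)) ≤ 1 := by nlinarith [sq_nonneg (2*t - 1)]
      have hpos : 0 < t * (1 - t) := by nlinarith
      have hmul : ((a * -t⁻¹ + (1 - a) * -((1 - t)⁻¹ * -1)) - 2 * (2 * (a - t) ^ 1 * -1))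
            * (t * (1 - t)) = (t - a) + 4 * (a - t) * (t * (1 - t)) := by
        field_simp [ht0.ne', sub_ne_zero_of_ne ht1.ne']
        ring
      have hle : ((a * -t⁻¹ + (1 - a) * -((1 - t)⁻¹ * -1)) - 2 * (2 * (a - t) ^ 1 * -1))
            * (t * (1 - t)) ≤ 0 := by rw [hmul]; nlinarith
      rw [mul_comm] at hle
      exact nonpos_of_mul_nonpos_right hle hpos
  have h1 := key (Set.left_mem_Icc.2 hba) (Set.right_mem_Icc.2 hba) hba
  have hfa : f a = 0 := by simp [hf]
  rw [hfa] at h1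
  simp only [hf] at h1
  linarith

/-- Pinsker's inequality for distributions on a finite set. -/
lemma finite_pinsker {α : Type*} [Fintype α] (P Q : α → ℝ)
    (hP : ∀ x, 0 < P x) (hQ : ∀ x, 0 < Q x)
    (hP1 : ∑ x, P x = 1) (hQ1 : ∑ x, Q x = 1) :
    (∑ x, |P x - Q x|) ^ 2 ≤ 2 * ∑ x, P x * (Real.log (P x) - Real.log (Q x)) := by
  classical
  set A : Finset α := Finset.univ.filter (fun x => Q x ≤ P x) with hA
  set a := ∑ x ∈ A, P x with ha
  set b := ∑ x ∈ A, Q x with hbdef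
  have hPA : ∑ x ∈ Aᶜ, P x = 1 - a := by
    have := Finset.sum_add_sum_compl A P
    rw [hP1] at this; linarith
  have hQA : ∑ x ∈ Aᶜ, Q x = 1 - b := by
    have := Finset.sum_add_sum_compl A Q
    rw [hQ1] at this; linarith
  have hmemA : ∀ x ∈ A, Q x ≤ P x := fun x hx => (Finset.mem_filter.mp hx).2
  have hmemAc : ∀ x ∈ Aᶜ, P x ≤ Q x := fun x hx => by
    have := Finset.mem_compl.mp hx
    simp only [hA, Finset.mem_filter, Finset.mem_univ, true_and, not_le] at this
    exact this.le
  have hba : b ≤ a := Finset.sum_le_sum hmemA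
  have hL1 : ∑ x, |P x - Q x| = 2 * (a - b) := by
    rw [← Finset.sum_add_sum_compl A]
    have e1 : ∑ x ∈ A, |P x - Q x| = a - b := by
      rw [ha, hbdef, ← Finset.sum_sub_distrib]
      exact Finset.sum_congr rfl fun x hx => abs_of_nonneg (by linarith [hmemA x hx])
    have e2 : ∑ x ∈ Aᶜ, |P x - Q x| = (1 - b) - (1 - a) := by
      rw [← hQA, ← hPA, ← Finset.sum_sub_distrib]
      exact Finset.sum_congr rfl fun x hx => by
        rw [abs_sub_comm]; exact abs_of_nonneg (by linarith [hmemAc x hx])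
    rw [e1, e2]; ring
  have hKL0 : 0 ≤ ∑ x, P x * (Real.log (P x) - Real.log (Q x)) := by
    have hpt : ∀ x ∈ Finset.univ (α := α),
        P x - Q x ≤ P x * (Real.log (P x) - Real.log (Q x)) := by
      intro x _
      have := logsum_pointwise (hP x) (hQ x) one_pos
      simpa using this
    have hs := Finset.sum_le_sum hpt
    rw [Finset.sum_sub_distrib, hP1, hQ1] at hs
    linarith
  rcases eq_or_lt_of_le hba with heq | hlt
  · rw [hL1, ← heq]; simp; linarith
  · have hAne : A.Nonempty := by
      rcases Finset.eq_empty_or_nonempty A with h | h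
      · exfalso; rw [h] at ha hbdef; simp at ha hbdef; rw [ha, hbdef] at hlt
        exact lt_irrefl _ hlt
      · exact h
    have hAcne : Aᶜ.Nonempty := by
      rcases Finset.eq_empty_or_nonempty Aᶜ with h | h
      · exfalso
        have h1 : a = 1 := by rw [h] at hPA; simp at hPA; linarith
        have h2 : b = 1 := by rw [h] at hQA; simp at hQA; linarith
        rw [h1, h2] at hlt; exact lt_irrefl _ hlt
      · exact h
    have hb0 : 0 < b := Finset.sum_pos (fun x hx => hQ x) hAne
    have ha0 : 0 < a := lt_trans hb0 hlt
    have ha1' : 0 < 1 - a := by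
      rw [← hPA]; exact Finset.sum_pos (fun x hx => hP x) hAcne
    have hb1' : 0 < 1 - b := by
      rw [← hQA]; exact Finset.sum_pos (fun x hx => hQ x) hAcne
    have hc1 : (0:ℝ) < a / b := div_pos ha0 hb0
    have hc2 : (0:ℝ) < (1 - a) / (1 - b) := div_pos ha1' hb1'
    have hsum1 : ∑ x ∈ A, (P x * Real.log (a / b) + P x - (a / b) * Q x)
        ≤ ∑ x ∈ A, P x * (Real.log (P x) - Real.log (Q x)) :=
      Finset.sum_le_sum fun x _ => logsum_pointwise (hP x) (hQ x) hc1
    have hsum2 : ∑ x ∈ Aᶜ, (P x * Real.log ((1 - a) / (1 - b)) + P x - ((1 - a) / (1 - b)) * Q x)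
        ≤ ∑ x ∈ Aᶜ, P x * (Real.log (P x) - Real.log (Q x)) :=
      Finset.sum_le_sum fun x _ => logsum_pointwise (hP x) (hQ x) hc2
    have e1 : ∑ x ∈ A, (P x * Real.log (a / b) + P x - (a / b) * Q x)
        = a * (Real.log a - Real.log b) := by
      rw [Finset.sum_sub_distrib, Finset.sum_add_distrib, ← Finset.sum_mul, ← Finset.mul_sum,
        ← ha, ← hbdef, Real.log_div ha0.ne' hb0.ne']
      field_simp
      ring
    have e2 : ∑ x ∈ Aᶜ, (P x * Real.log ((1 - a) / (1 - b)) + P x - ((1 - a) / (1 - b)) * Q x)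
        = (1 - a) * (Real.log (1 - a) - Real.log (1 - b)) := by
      rw [Finset.sum_sub_distrib, Finset.sum_add_distrib, ← Finset.sum_mul, ← Finset.mul_sum,
        hPA, hQA, Real.log_div ha1'.ne' hb1'.ne']
      field_simp
      ring
    have hsp := scalar_pinsker hb0 hba (by linarith)
    have hsplit : ∑ x, P x * (Real.log (P x) - Real.log (Q x))
        = ∑ x ∈ A, P x * (Real.log (P x) - Real.log (Q x))
          + ∑ x ∈ Aᶜ, P x * (Real.log (P x) - Real.log (Q x)) :=
      (Finset.sum_add_sum_compl A _).symm
    rw [hL1, hsplit]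
    nlinarith [hsum1, hsum2, e1, e2]

lemma sum_prod_bool {n : ℕ} (f : Fin n → Bool → ℝ) :
    ∑ x : Fin n → Bool, ∏ j, f j (x j) = ∏ j, (f j true + f j false) := by
  rw [← Fintype.prod_sum]
  exact Finset.prod_congr rfl fun j _ => by rw [Fintype.sum_bool]

lemma sum_prod_mul {n : ℕ} (f : Fin n → Bool → ℝ) (h : Bool → ℝ) (i : Fin n)
    (hnorm : ∀ j, f j true + f j false = 1) :
    ∑ x : Fin n → Bool, (∏ j, f j (x j)) * h (x i)
      = f i true * h true + f i false * h false := by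
  have key : ∀ x : Fin n → Bool,
      (∏ j, f j (x j)) * h (x i) = ∏ j, (f j (x j) * (if j = i then h (x j) else 1)) := by
    intro x
    rw [Finset.prod_mul_distrib, Finset.prod_ite_eq' Finset.univ i (fun j => h (x j))]
    simp
  simp_rw [key]
  rw [sum_prod_bool (fun j b => f j b * (if j = i then h b else 1))]
  rw [Finset.prod_eq_single i]
  · simp
  · intro j _ hji
    simp [hji, hnorm j]
  · simp

/-- KL divergence bound for Bernoulli distributions. -/
lemma kl_bern_le {p q : ℝ} (hp0 : 0 < p) (hp1 : p < 1) (hq0 : 0 < q) (hq1 : q < 1) :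
    p * (Real.log p - Real.log q) + (1 - p) * (Real.log (1 - p) - Real.log (1 - q))
      ≤ (p - q) ^ 2 / (q * (1 - q)) := by
  have hp1' : (0:ℝ) < 1 - p := by linarith
  have hq1' : (0:ℝ) < 1 - q := by linarith
  have h1 := Real.log_le_sub_one_of_pos (div_pos hp0 hq0)
  rw [Real.log_div hp0.ne' hq0.ne'] at h1
  have h2 := Real.log_le_sub_one_of_pos (div_pos hp1' hq1')
  rw [Real.log_div hp1'.ne' hq1'.ne'] at h2
  have key : p * (p / q - 1) + (1 - p) * ((1 - p) / (1 - q) - 1)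
      = (p - q) ^ 2 / (q * (1 - q)) := by
    field_simp
    ring
  nlinarith [mul_le_mul_of_nonneg_left h1 hp0.le, mul_le_mul_of_nonneg_left h2 hp1'.le]

end aux

theorem stmt1 (n : ℕ) (hn : 1 ≤ n) (p q : Fin n → ℝ)
    (hp : ∀ i, p i ∈ Set.Ioo (0:ℝ) 1) (hq : ∀ i, q i ∈ Set.Ioo (0:ℝ) 1) :
    (l1Dist (prodDist p) (prodDist q)) ^ 2
      ≤ 2 * ∑ i, (p i - q i) ^ 2 / (q i * (1 - q i)) := by
  classical
  set f : Fin n → Bool → ℝ := fun j b => if b then p j else 1 - p j with hfdef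
  set g : Fin n → Bool → ℝ := fun j b => if b then q j else 1 - q j with hgdef
  have hfpos : ∀ j b, 0 < f j b := by
    intro j b; cases b <;> simp [hfdef] <;> [linarith [(hp j).2]; exact (hp j).1]
  have hgpos : ∀ j b, 0 < g j b := by
    intro j b; cases b <;> simp [hgdef] <;> [linarith [(hq j).2]; exact (hq j).1]
  have hfnorm : ∀ j, f j true + f j false = 1 := by intro j; simp [hfdef]
  have hgnorm : ∀ j, g j true + g j false = 1 := by intro j; simp [hgdef]
  have hPx : ∀ x, prodDist p x = ∏ j, f j (x j) := fun x => rfl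
  have hQx : ∀ x, prodDist q x = ∏ j, g j (x j) := fun x => rfl
  have hPpos : ∀ x, 0 < prodDist p x := fun x =>
    Finset.prod_pos fun j _ => hfpos j (x j)
  have hQpos : ∀ x, 0 < prodDist q x := fun x =>
    Finset.prod_pos fun j _ => hgpos j (x j)
  have hP1 : ∑ x, prodDist p x = 1 := by
    simp only [hPx]
    rw [sum_prod_bool]
    simp [hfnorm]
  have hQ1 : ∑ x, prodDist q x = 1 := by
    simp only [hQx]
    rw [sum_prod_bool]
    simp [hgnorm]
  have hpins := finite_pinsker (prodDist p) (prodDist q) hPpos hQpos hP1 hQ1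
  -- compute the KL divergence
  have hlog : ∀ x : Fin n → Bool,
      Real.log (prodDist p x) - Real.log (prodDist q x)
        = ∑ j, (Real.log (f j (x j)) - Real.log (g j (x j))) := by
    intro x
    rw [hPx, hQx, Real.log_prod (fun j _ => (hfpos j (x j)).ne'),
      Real.log_prod (fun j _ => (hgpos j (x j)).ne'), ← Finset.sum_sub_distrib]
  have hKL : ∑ x, prodDist p x * (Real.log (prodDist p x) - Real.log (prodDist q x))
      = ∑ i, (f i true * (Real.log (f i true) - Real.log (g i true))
            + f i false * (Real.log (f i false) - Real.log (g i false))) := by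
    have step1 : ∀ x : Fin n → Bool,
        prodDist p x * (Real.log (prodDist p x) - Real.log (prodDist q x))
          = ∑ i, (∏ j, f j (x j)) * (Real.log (f i (x i)) - Real.log (g i (x i))) := by
      intro x
      rw [hlog x, hPx, Finset.mul_sum]
    simp_rw [step1]
    rw [Finset.sum_comm]
    exact Finset.sum_congr rfl fun i _ =>
      sum_prod_mul f (fun b => Real.log (f i b) - Real.log (g i b)) i hfnorm
  have hbound : ∑ i, (f i true * (Real.log (f i true) - Real.log (g i true))
            + f i false * (Real.log (f i false) - Real.log (g i false)))
      ≤ ∑ i, (p i - q i) ^ 2 / (q i * (1 - q i)) := by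
    apply Finset.sum_le_sum
    intro i _
    have := kl_bern_le (hp i).1 (hp i).2 (hq i).1 (hq i).2
    simpa [hfdef, hgdef] using this
  calc (l1Dist (prodDist p) (prodDist q)) ^ 2
      ≤ 2 * ∑ x, prodDist p x * (Real.log (prodDist p x) - Real.log (prodDist q x)) := hpins
    _ = 2 * ∑ i, (f i true * (Real.log (f i true) - Real.log (g i true))
            + f i false * (Real.log (f i false) - Real.log (g i false))) := by rw [hKL]
    _ ≤ 2 * ∑ i, (p i - q i) ^ 2 / (q i * (1 - q i)) := by linarith [hbound]
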